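/- Let (ω_k)_{k≥1} and (ω_{nk})_{k≥1} be summable sequences of nonnegative reals with Σ_k ω_{nk} ≤ c for a fixed constant c, and let (N_k) be i.i.d. standard normal random variables. If sup_{k≤L} |ω_{nk} − ω_k| → 0 as n → ∞ for every fixed L, and there is a summable positive sequence (a_k) with sup_k ω_{nk}/a_k bounded, then Σ_k ω_{nk} N_k² − Σ_k ω_k N_k² → 0 in probability as n → ∞. -/

import Mathlib

open MeasureTheory ProbabilityTheory Filter
open scoped ENNReal NNReal

section Aux
open Real

lemma sq_meas_ofReal : Measurable fun y : ℝ => ENNReal.ofReal (y ^ 2) := by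
  measurability

lemma second_moment_gaussian_lt_top :
    ∫⁻ y, ENNReal.ofReal (y ^ 2) ∂(gaussianReal 0 1) < ⊤ := by
  rw [gaussianReal_of_var_ne_zero 0 one_ne_zero,
    lintegral_withDensity_eq_lintegral_mul _ (measurable_gaussianPDF 0 1) sq_meas_ofReal]
  have h2 : Integrable (fun x : ℝ => x ^ (2:ℝ) * Real.exp (-(2⁻¹:ℝ) * x ^ 2)) :=
    integrable_rpow_mul_exp_neg_mul_sq (by norm_num) (by norm_num)
  have hint : Integrable (fun y : ℝ => gaussianPDFReal 0 1 y * y ^ 2) := by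
    have := (h2.const_mul (√(2 * π))⁻¹)
    refine this.congr ?_
    filter_upwards with y
    have h2r : y ^ (2:ℝ) = y ^ 2 := by
      rw [show (2:ℝ) = ((2:ℕ):ℝ) by norm_num, Real.rpow_natCast]
    simp only [gaussianPDFReal, NNReal.coe_one, mul_one, sub_zero, h2r]
    rw [neg_div]
    ring_nf
  have heq : ∀ y : ℝ, (gaussianPDF 0 1 * fun y : ℝ => ENNReal.ofReal (y ^ 2)) y
      = ENNReal.ofReal (gaussianPDFReal 0 1 y * y ^ 2) := fun y => by
    simp only [Pi.mul_apply, gaussianPDF]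
    rw [← ENNReal.ofReal_mul (gaussianPDFReal_nonneg _ _ _)]
  simp_rw [heq]
  exact hint.lintegral_lt_top

end Aux

/-- If the nonnegative weights `ω_{nk}` converge to `ω_k` for each fixed `k`, have
uniformly bounded sums `∑_k ω_{nk} ≤ c`, and are dominated by a summable sequence
`a_k` (up to a constant), then for i.i.d. standard normals `N_k` the weighted
chi-square sums satisfy `∑_k ω_{nk}N_k² − ∑_k ω_k N_k² → 0` in probability. -/
theorem stmt_14 {Ω : Type*} [MeasurableSpace Ω] (μ : Measure Ω) [IsProbabilityMeasure μ]
    (N : ℕ → Ω → ℝ) (hNmeas : ∀ k, Measurable (N k))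
    (hNlaw : ∀ k, μ.map (N k) = gaussianReal 0 1)
    (hNindep : iIndepFun N μ)
    (w : ℕ → ℝ) (wn : ℕ → ℕ → ℝ) (c : ℝ)
    (hw : ∀ k, 0 ≤ w k) (hwn : ∀ n k, 0 ≤ wn n k)
    (hwsum : Summable w) (hwnsum : ∀ n, Summable (wn n))
    (hc : ∀ n, ∑' k, wn n k ≤ c)
    (hconv : ∀ k, Tendsto (fun n => wn n k) atTop (nhds (w k)))
    (a : ℕ → ℝ) (ha : ∀ k, 0 < a k) (hasum : Summable a)
    (Cb : ℝ) (hdom : ∀ n k, wn n k ≤ Cb * a k) :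
    TendstoInMeasure μ
      (fun n x => (∑' k, wn n k * (N k x) ^ 2) - ∑' k, w k * (N k x) ^ 2)
      atTop (fun _ => (0 : ℝ)) := by
  -- second moment
  set m : ℝ≥0∞ := ∫⁻ y, ENNReal.ofReal (y ^ 2) ∂(gaussianReal 0 1) with hm
  have hmlt : m < ⊤ := second_moment_gaussian_lt_top
  have hmom : ∀ k, ∫⁻ x, ENNReal.ofReal ((N k x) ^ 2) ∂μ = m := by
    intro k
    rw [hm, ← hNlaw k, lintegral_map sq_meas_ofReal (hNmeas k)]
  -- dominating sequence
  set b : ℕ → ℝ := fun k => Cb * a k + w k with hb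
  have hCa : ∀ k, 0 ≤ Cb * a k := fun k => (hwn 0 k).trans (hdom 0 k)
  have hbn : ∀ k, 0 ≤ b k := fun k => add_nonneg (hCa k) (hw k)
  have hbsum : Summable b := (hasum.mul_left Cb).add hwsum
  have hwnle : ∀ n k, wn n k ≤ b k := fun n k =>
    (hdom n k).trans (le_add_of_nonneg_right (hw k))
  have hwle : ∀ k, w k ≤ b k := fun k => le_add_of_nonneg_left (hCa k)
  have hΔle : ∀ n k, |wn n k - w k| ≤ b k := by
    intro n k
    rw [abs_le]
    have h1 := hwn n k; have h2 := hw k; have h3 := hwnle n k; have h4 := hwle k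
    constructor <;> linarith
  -- lintegral of weighted chi-square series
  have hlin : ∀ (d : ℕ → ℝ), (∀ k, 0 ≤ d k) →
      ∫⁻ x, ∑' k, ENNReal.ofReal (d k * (N k x) ^ 2) ∂μ
        = ∑' k, ENNReal.ofReal (d k) * m := by
    intro d hd
    rw [lintegral_tsum (fun k =>
      ((((hNmeas k).pow_const 2).const_mul (d k)).ennreal_ofReal).aemeasurable)]
    refine tsum_congr fun k => ?_
    simp_rw [ENNReal.ofReal_mul (hd k)]
    rw [lintegral_const_mul _ ((hNmeas k).pow_const 2).ennreal_ofReal, hmom k]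
  -- a.e. summability of the dominating series
  have hae : ∀ᵐ x ∂μ, Summable (fun k => b k * (N k x) ^ 2) := by
    have hfin : ∫⁻ x, ∑' k, ENNReal.ofReal (b k * (N k x) ^ 2) ∂μ < ⊤ := by
      rw [hlin b hbn, ENNReal.tsum_mul_right,
        ← ENNReal.ofReal_tsum_of_nonneg hbn hbsum]
      exact ENNReal.mul_lt_top ENNReal.ofReal_lt_top hmlt
    have hmeas : Measurable fun x => ∑' k, ENNReal.ofReal (b k * (N k x) ^ 2) :=
      Measurable.ennreal_tsum fun k =>
        (((hNmeas k).pow_const 2).const_mul (b k)).ennreal_ofReal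
    have h := ae_lt_top hmeas hfin.ne
    filter_upwards [h] with x hx
    have hs := ENNReal.summable_toReal hx.ne
    refine (summable_congr fun k => ?_).mp hs
    rw [ENNReal.toReal_ofReal (mul_nonneg (hbn k) (sq_nonneg _))]
  -- real tsum of |Δ| tends to 0
  have htends : Tendsto (fun n => ∑' k, |wn n k - w k|) atTop (nhds 0) := by
    have h := tendsto_tsum_of_dominated_convergence (𝓕 := atTop)
      (f := fun n k => |wn n k - w k|) (g := fun _ => 0) (bound := b) hbsum
      (fun k => by
        have h0 : Tendsto (fun n => |wn n k - w k|) atTop (nhds |w k - w k|) :=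
          ((hconv k).sub tendsto_const_nhds).abs
        simpa using h0)
      (Eventually.of_forall fun n k => by
        rw [Real.norm_eq_abs, abs_abs]; exact hΔle n k)
    simpa using h
  rw [tendstoInMeasure_iff_dist]
  intro ε hε
  have hεne : ENNReal.ofReal ε ≠ 0 := by simp [hε, le_of_lt, ENNReal.ofReal_eq_zero, not_le]
  set G : ℕ → Ω → ℝ≥0∞ := fun n x => ∑' k, ENNReal.ofReal (|wn n k - w k| * (N k x) ^ 2)
    with hG
  have hGmeas : ∀ n, Measurable (G n) := fun n =>
    Measurable.ennreal_tsum fun k =>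
      (((hNmeas k).pow_const 2).const_mul _).ennreal_ofReal
  have hΔsum : ∀ n, Summable fun k => |wn n k - w k| :=
    fun n => Summable.of_nonneg_of_le (fun k => abs_nonneg _) (hΔle n) hbsum
  have hGint : ∀ n, ∫⁻ x, G n x ∂μ = ENNReal.ofReal (∑' k, |wn n k - w k|) * m := by
    intro n
    rw [hlin _ (fun k => abs_nonneg _), ENNReal.tsum_mul_right,
      ← ENNReal.ofReal_tsum_of_nonneg (fun k => abs_nonneg _) (hΔsum n)]
  -- bound the measure
  have hbound : ∀ n, μ {x | ε ≤ dist ((∑' k, wn n k * (N k x) ^ 2)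
        - ∑' k, w k * (N k x) ^ 2) 0}
      ≤ ENNReal.ofReal (∑' k, |wn n k - w k|) * m / ENNReal.ofReal ε := by
    intro n
    have hsub : μ {x | ε ≤ dist ((∑' k, wn n k * (N k x) ^ 2)
          - ∑' k, w k * (N k x) ^ 2) 0}
        ≤ μ {x | ENNReal.ofReal ε ≤ G n x} := by
      apply measure_mono_ae
      filter_upwards [hae] with x hx hmem
      have hs1 : Summable fun k => wn n k * (N k x) ^ 2 :=
        Summable.of_nonneg_of_le (fun k => mul_nonneg (hwn n k) (sq_nonneg _))
          (fun k => mul_le_mul_of_nonneg_right (hwnle n k) (sq_nonneg _)) hx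
      have hs2 : Summable fun k => w k * (N k x) ^ 2 :=
        Summable.of_nonneg_of_le (fun k => mul_nonneg (hw k) (sq_nonneg _))
          (fun k => mul_le_mul_of_nonneg_right (hwle k) (sq_nonneg _)) hx
      have hs3 : Summable fun k => |wn n k - w k| * (N k x) ^ 2 :=
        Summable.of_nonneg_of_le (fun k => mul_nonneg (abs_nonneg _) (sq_nonneg _))
          (fun k => mul_le_mul_of_nonneg_right (hΔle n k) (sq_nonneg _)) hx
      replace hmem : ε ≤ |(∑' k, wn n k * (N k x) ^ 2) - ∑' k, w k * (N k x) ^ 2| := by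
        have hmem' : ε ≤ dist ((∑' k, wn n k * (N k x) ^ 2)
          - ∑' k, w k * (N k x) ^ 2) 0 := hmem
        simpa [Real.dist_0_eq_abs] using hmem'
      have hdiff : (∑' k, wn n k * (N k x) ^ 2) - ∑' k, w k * (N k x) ^ 2
          = ∑' k, (wn n k * (N k x) ^ 2 - w k * (N k x) ^ 2) :=
        (Summable.tsum_sub hs1 hs2).symm
      have hterm : ∀ k, ‖wn n k * (N k x) ^ 2 - w k * (N k x) ^ 2‖
          = |wn n k - w k| * (N k x) ^ 2 := fun k => by
        rw [Real.norm_eq_abs, ← sub_mul, abs_mul, abs_of_nonneg (sq_nonneg (N k x))]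
      have habs : |(∑' k, wn n k * (N k x) ^ 2) - ∑' k, w k * (N k x) ^ 2|
          ≤ ∑' k, |wn n k - w k| * (N k x) ^ 2 := by
        rw [hdiff]
        have hns : Summable fun k => ‖wn n k * (N k x) ^ 2 - w k * (N k x) ^ 2‖ :=
          hs3.congr fun k => (hterm k).symm
        have h := norm_tsum_le_tsum_norm hns
        rw [Real.norm_eq_abs] at h
        exact h.trans (le_of_eq (tsum_congr hterm))
      have : ENNReal.ofReal ε ≤ ENNReal.ofReal (∑' k, |wn n k - w k| * (N k x) ^ 2) :=
        ENNReal.ofReal_le_ofReal (hmem.trans habs)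
      show ENNReal.ofReal ε ≤ ∑' k, ENNReal.ofReal (|wn n k - w k| * (N k x) ^ 2)
      rwa [ENNReal.ofReal_tsum_of_nonneg
        (fun k => mul_nonneg (abs_nonneg _) (sq_nonneg _)) hs3] at this
    refine hsub.trans ?_
    rw [ENNReal.le_div_iff_mul_le (Or.inl hεne) (Or.inl ENNReal.ofReal_ne_top), mul_comm]
    exact (mul_meas_ge_le_lintegral₀ (hGmeas n).aemeasurable _).trans (hGint n).le
  have hbt : Tendsto (fun n => ENNReal.ofReal (∑' k, |wn n k - w k|) * m
      / ENNReal.ofReal ε) atTop (nhds 0) := by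
    have h1 : Tendsto (fun n => ENNReal.ofReal (∑' k, |wn n k - w k|)) atTop (nhds 0) := by
      rw [show (0 : ENNReal) = ENNReal.ofReal 0 by simp]
      exact (ENNReal.continuous_ofReal.tendsto 0).comp htends
    have h2 := ENNReal.Tendsto.mul_const h1 (Or.inr hmlt.ne)
    rw [zero_mul] at h2
    have h3 := ENNReal.Tendsto.mul_const h2
      (Or.inr (ENNReal.inv_ne_top.mpr hεne))
    rw [zero_mul] at h3
    simpa [div_eq_mul_inv] using h3
  exact tendsto_of_tendsto_of_tendsto_of_le_of_le tendsto_const_nhds hbt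
    (fun n => zero_le) hbound
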